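/- arXiv:1604.03684 — 4 statements merged into one kernel-verified Lean document; each statement's English description precedes it below -/
import Mathlib

section
/- If a commutative noetherian ring R satisfies Serre's condition (S_n), then every n-syzygy finitely generated R-module satisfies (S_n). -/
open CategoryTheory IsLocalRing

noncomputable section

/-- The Ext module `Ext^n_R(M, N)`. -/
noncomputable def extMod (R : Type) [CommRing R] (M N : ModuleCat R) (n : ℕ) : ModuleCat R :=
  ((Ext R (ModuleCat R) n).obj (Opposite.op M)).obj N

/-- `M` is an `n`-syzygy module: there is an exact sequence
`0 → M → P_{n-1} → ⋯ → P_0` with each `P_i` finitely generated projective. -/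
def IsSyzygyOf (R : Type) [CommRing R] : ℕ → ModuleCat R → Prop
  | 0, _ => True
  | n + 1, M => ∃ (P : ModuleCat R) (f : M →ₗ[R] P), Module.Finite R P ∧
      Module.Projective R P ∧ Function.Injective f ∧
      IsSyzygyOf R n (ModuleCat.of R (P ⧸ LinearMap.range f))

/-- A finite projective presentation `P₁ → P₀ → M → 0`. -/
structure FinProjPres (R : Type) [CommRing R] (M : ModuleCat R) where
  P0 : ModuleCat.{0} R
  P1 : ModuleCat.{0} R
  fin0 : Module.Finite R P0
  fin1 : Module.Finite R P1
  proj0 : Module.Projective R P0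
  proj1 : Module.Projective R P1
  f : P1 →ₗ[R] P0
  g : P0 →ₗ[R] M
  surj : Function.Surjective g
  exact : LinearMap.range f = LinearMap.ker g

/-- The Auslander transpose with respect to a presentation:
the cokernel of `Hom(f, R) : Hom(P₀, R) → Hom(P₁, R)`. -/
noncomputable def FinProjPres.Tr {R : Type} [CommRing R] {M : ModuleCat R}
    (pres : FinProjPres R M) : ModuleCat R :=
  ModuleCat.of R (Module.Dual R pres.P1 ⧸ LinearMap.range pres.f.dualMap)

/-- `M` is `n`-torsionfree: `Ext^i_R(Tr M, R) = 0` for `1 ≤ i ≤ n`. -/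
def IsTorsionfreeOf (R : Type) [CommRing R] (n : ℕ) (M : ModuleCat R) : Prop :=
  ∀ pres : FinProjPres R M, ∀ i : ℕ, 1 ≤ i → i ≤ n →
    Subsingleton (extMod R pres.Tr (ModuleCat.of R R) i)

/-- The depth of a module over a local ring, as the least `n` with
`Ext^n(k, M) ≠ 0`. -/
noncomputable def localDepth (R : Type) [CommRing R] [IsLocalRing R] (M : ModuleCat R) : ℕ∞ :=
  sInf {n : ℕ∞ | ∃ m : ℕ, n = m ∧
    Nontrivial (extMod R (ModuleCat.of R (ResidueField R)) M m)}

/-- The height of a prime ideal. -/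
noncomputable def primeHt {R : Type} [CommRing R] (p : PrimeSpectrum R) : ℕ∞ :=
  Order.height p

/-- Serre's condition `(S_n)` for a module. -/
def SerreCond (R : Type) [CommRing R] (n : ℕ) (M : ModuleCat R) : Prop :=
  ∀ p : PrimeSpectrum R,
    min (n : ℕ∞) (primeHt p) ≤
      localDepth (Localization.AtPrime p.asIdeal)
        (ModuleCat.of (Localization.AtPrime p.asIdeal)
          (LocalizedModule p.asIdeal.primeCompl M))

/-- A local ring is Gorenstein if it has finite injective dimension over itself. -/
def IsGorensteinLocalRing (R : Type) [CommRing R] [IsLocalRing R] : Prop :=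
  ∃ n : ℕ, ∀ (M : ModuleCat R) (i : ℕ), n < i →
    Subsingleton (extMod R M (ModuleCat.of R R) i)

end

noncomputable section

/-- The depth of the localization `R_p` as a module over itself. -/
noncomputable def ringDepthAt (R : Type) [CommRing R] (p : PrimeSpectrum R) : ℕ∞ :=
  localDepth (Localization.AtPrime p.asIdeal)
    (ModuleCat.of (Localization.AtPrime p.asIdeal) (Localization.AtPrime p.asIdeal))

/-- `R_p` is a Gorenstein local ring. -/
def GorensteinAt (R : Type) [CommRing R] (p : PrimeSpectrum R) : Prop :=
  IsGorensteinLocalRing (Localization.AtPrime p.asIdeal)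

/-- The condition `(G_{n-1})`: `R_p` is Gorenstein for every prime `p` with `ht p ≤ n - 1`. -/
def CondG (R : Type) [CommRing R] (n : ℕ) : Prop :=
  ∀ p : PrimeSpectrum R, primeHt p < (n : ℕ∞) → GorensteinAt R p

/-- The condition `(G̃_{n-1})`: `R_p` is Gorenstein for every prime `p` with
`depth R_p ≤ n - 1`. -/
def CondGt (R : Type) [CommRing R] (n : ℕ) : Prop :=
  ∀ p : PrimeSpectrum R, ringDepthAt R p < (n : ℕ∞) → GorensteinAt R p

end
noncomputable section SyzAux

open CategoryTheory Limits

variable {S : Type} [CommRing S]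

lemma SyzAux.subsingleton_of_isZero {M : ModuleCat S} (h : IsZero M) : Subsingleton M := by
  refine ⟨fun a b => ?_⟩
  have h0 : (𝟙 M : M ⟶ M) = 0 := h.eq_of_src _ _
  calc a = (𝟙 M : M ⟶ M) a := rfl
    _ = (0 : M ⟶ M) a := by rw [h0]
    _ = (𝟙 M : M ⟶ M) b := by rw [h0]; rfl
    _ = b := rfl

lemma SyzAux.subsingleton_equiv {α β : Type} (e : α ≃ β) (h : Subsingleton α) :
    Subsingleton β :=
  ⟨fun a b => by
    rw [← e.apply_symm_apply a, ← e.apply_symm_apply b, h.elim (e.symm a) (e.symm b)]⟩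

lemma SyzAux.ext_subsingleton_congr (X : ModuleCat S) {N N' : ModuleCat S} (e : N ≅ N') (m : ℕ)
    (h : Subsingleton (extMod S X N m)) : Subsingleton (extMod S X N' m) := by
  have e2 := ((Ext S (ModuleCat S) m).obj (Opposite.op X)).mapIso e
  exact SyzAux.subsingleton_equiv e2.toLinearEquiv.toEquiv h

lemma SyzAux.subsingleton_ext_iff (X N : ModuleCat S) (m : ℕ) (Q : ProjectiveResolution X) :
    Subsingleton (extMod S X N m) ↔ IsZero ((Q.complex.linearYonedaObj S N).homology m) := by
  have e := Q.isoExt (R := S) m N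
  constructor
  · intro h
    exact @ModuleCat.isZero_of_subsingleton _ _ _
      (SyzAux.subsingleton_equiv e.toLinearEquiv.toEquiv h)
  · intro h
    exact SyzAux.subsingleton_equiv e.symm.toLinearEquiv.toEquiv
      (SyzAux.subsingleton_of_isZero h)

/-- Postcomposition induces a map of Hom complexes. -/
def SyzAux.yonedaMapC {A B : ModuleCat S} (K : ChainComplex (ModuleCat S) ℕ) (g : A ⟶ B) :
    K.linearYonedaObj S A ⟶ K.linearYonedaObj S B where
  f i := ModuleCat.ofHom (Linear.rightComp S (K.X i) g)
  comm' i j _ := by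
    ext x
    show (K.d j i ≫ x) ≫ g = K.d j i ≫ (x ≫ g)
    exact Category.assoc _ _ _

lemma SyzAux.ext_subsingleton_of_subsingleton (X N : ModuleCat S) (hN : Subsingleton N) (m : ℕ) :
    Subsingleton (extMod S X N m) := by
  obtain ⟨Q⟩ : Nonempty (ProjectiveResolution X) := HasProjectiveResolution.out
  rw [SyzAux.subsingleton_ext_iff X N m Q]
  rw [← HomologicalComplex.exactAt_iff_isZero_homology, HomologicalComplex.exactAt_iff]
  refine ShortComplex.exact_of_isZero_X₂ _ ?_
  refine @ModuleCat.isZero_of_subsingleton _ _ _ ?_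
  show Subsingleton (Q.complex.X m ⟶ N)
  haveI := hN
  exact ⟨fun a b => ModuleCat.hom_ext (LinearMap.ext fun _ => Subsingleton.elim _ _)⟩

/-- The short complex of Hom complexes induced by a short exact sequence. -/
lemma SyzAux.yoneda_shortExact (X : ModuleCat S) (sc : ShortComplex (ModuleCat S))
    (hsc : sc.ShortExact) (Q : ProjectiveResolution X) :
    (ShortComplex.mk (SyzAux.yonedaMapC Q.complex sc.f) (SyzAux.yonedaMapC Q.complex sc.g)
      (by ext i x; revert x; change ∀ x : (Q.complex.X i ⟶ sc.X₁), (x ≫ sc.f) ≫ sc.g = 0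
          intro x; rw [Category.assoc, sc.zero, Limits.comp_zero])).ShortExact := by
  haveI := hsc.mono_f
  haveI := hsc.epi_g
  have hfinj : Function.Injective sc.f := (ModuleCat.mono_iff_injective sc.f).1 inferInstance
  refine HomologicalComplex.shortExact_of_degreewise_shortExact _ (fun i => ?_)
  have hmono : Mono ((SyzAux.yonedaMapC Q.complex sc.f).f i) := by
    rw [ModuleCat.mono_iff_injective]
    show Function.Injective (fun (x : Q.complex.X i ⟶ sc.X₁) => x ≫ sc.f)
    intro x y hxy
    refine ModuleCat.hom_ext (LinearMap.ext fun a => hfinj ?_)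
    exact ConcreteCategory.congr_hom hxy a
  have hepi : Epi ((SyzAux.yonedaMapC Q.complex sc.g).f i) := by
    rw [ModuleCat.epi_iff_surjective]
    show Function.Surjective (fun (x : Q.complex.X i ⟶ sc.X₂) => x ≫ sc.g)
    intro h
    exact ⟨Projective.factorThru h sc.g, Projective.factorThru_comp h sc.g⟩
  have hexact : (ShortComplex.mk ((SyzAux.yonedaMapC Q.complex sc.f).f i)
      ((SyzAux.yonedaMapC Q.complex sc.g).f i)
      (by ext x; revert x; change ∀ x : (Q.complex.X i ⟶ sc.X₁), (x ≫ sc.f) ≫ sc.g = 0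
          intro x; rw [Category.assoc, sc.zero, Limits.comp_zero])).Exact := by
    rw [ShortComplex.moduleCat_exact_iff]
    intro x hx
    have x' : Q.complex.X i ⟶ sc.X₂ := x
    have hx' : (x : Q.complex.X i ⟶ sc.X₂) ≫ sc.g = 0 := hx
    obtain ⟨l, hl⟩ := KernelFork.IsLimit.lift' hsc.exact.fIsKernel _ hx'
    exact ⟨l, hl⟩
  exact { exact := hexact, mono_f := hmono, epi_g := hepi }

lemma SyzAux.ext_subsingleton_of_ses (X : ModuleCat S) (sc : ShortComplex (ModuleCat S))
    (hsc : sc.ShortExact) (m : ℕ)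
    (hB : Subsingleton (extMod S X sc.X₂ m))
    (hC : ∀ m', m' + 1 = m → Subsingleton (extMod S X sc.X₃ m')) :
    Subsingleton (extMod S X sc.X₁ m) := by
  haveI := hsc.mono_f
  have hfinj : Function.Injective sc.f := (ModuleCat.mono_iff_injective sc.f).1 inferInstance
  obtain ⟨Q⟩ : Nonempty (ProjectiveResolution X) := HasProjectiveResolution.out
  have hSCC := SyzAux.yoneda_shortExact X sc hsc Q
  rw [SyzAux.subsingleton_ext_iff X _ m Q] at hB ⊢
  obtain _ | m := m
  · -- degree 0 case
    rw [← HomologicalComplex.exactAt_iff_isZero_homology] at hB ⊢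
    rw [HomologicalComplex.exactAt_iff, ShortComplex.moduleCat_exact_iff] at hB ⊢
    intro x hx
    have hx' : (Q.complex.linearYonedaObj S sc.X₁).d 0 ((ComplexShape.up ℕ).next 0) x = 0 := hx
    have hcomm : (Q.complex.linearYonedaObj S sc.X₂).d 0 ((ComplexShape.up ℕ).next 0)
        (((SyzAux.yonedaMapC Q.complex sc.f).f 0) x)
        = ((SyzAux.yonedaMapC Q.complex sc.f).f ((ComplexShape.up ℕ).next 0))
          ((Q.complex.linearYonedaObj S sc.X₁).d 0 ((ComplexShape.up ℕ).next 0) x) :=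
      ConcreteCategory.congr_hom ((SyzAux.yonedaMapC Q.complex sc.f).comm 0 ((ComplexShape.up ℕ).next 0)) x
    rw [hx', map_zero] at hcomm
    obtain ⟨y, hy⟩ := hB _ hcomm
    have hf0 : ((SyzAux.yonedaMapC Q.complex sc.f).f 0) x = 0 := by
      rw [← hy]
      show (Q.complex.linearYonedaObj S sc.X₂).d ((ComplexShape.up ℕ).prev 0) 0 y = 0
      rw [HomologicalComplex.shape _ _ _ (by simp [CochainComplex.prev_nat_zero])]
      rfl
    have hx0 : x = 0 := by
      have hcf : (x : Q.complex.X 0 ⟶ sc.X₁) ≫ sc.f = 0 := hf0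
      refine ModuleCat.hom_ext (LinearMap.ext fun a => hfinj ?_)
      have h2 := ConcreteCategory.congr_hom hcf a
      exact h2.trans (map_zero _).symm
    exact ⟨0, by rw [map_zero, hx0]⟩
  · -- successor case, via the long exact sequence
    have hC' := hC m rfl
    rw [SyzAux.subsingleton_ext_iff X _ m Q] at hC'
    have hex := hSCC.homology_exact₁ m (m + 1) (by simp)
    refine hex.isZero_X₂ ?_ ?_
    · exact hC'.eq_of_src _ _
    · exact hB.eq_of_tgt _ _

lemma SyzAux.ext_subsingleton_of_ses₂ (X : ModuleCat S) (sc : ShortComplex (ModuleCat S))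
    (hsc : sc.ShortExact) (m : ℕ)
    (hA : Subsingleton (extMod S X sc.X₁ m))
    (hC : Subsingleton (extMod S X sc.X₃ m)) :
    Subsingleton (extMod S X sc.X₂ m) := by
  obtain ⟨Q⟩ : Nonempty (ProjectiveResolution X) := HasProjectiveResolution.out
  have hSCC := SyzAux.yoneda_shortExact X sc hsc Q
  rw [SyzAux.subsingleton_ext_iff X _ m Q] at hA hC ⊢
  have hex := hSCC.homology_exact₂ m
  refine hex.isZero_X₂ ?_ ?_
  · exact hA.eq_of_src _ _
  · exact hC.eq_of_tgt _ _

variable [IsLocalRing S]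

lemma SyzAux.subsingleton_ext_of_lt_localDepth (N : ModuleCat S) {m : ℕ}
    (h : (m : ℕ∞) < localDepth S N) :
    Subsingleton (extMod S (ModuleCat.of S (IsLocalRing.ResidueField S)) N m) := by
  by_contra hc
  rw [not_subsingleton_iff_nontrivial] at hc
  exact absurd (sInf_le ⟨m, rfl, hc⟩ : localDepth S N ≤ (m : ℕ∞)) (not_le.2 h)

lemma SyzAux.le_localDepth (N : ModuleCat S) (d : ℕ∞)
    (h : ∀ m : ℕ, (m : ℕ∞) < d →
      Subsingleton (extMod S (ModuleCat.of S (IsLocalRing.ResidueField S)) N m)) :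
    d ≤ localDepth S N := by
  refine le_sInf fun b hb => ?_
  obtain ⟨m, rfl, hm⟩ := hb
  by_contra hlt
  haveI := h m (not_le.1 hlt)
  exact absurd hm (not_nontrivial _)

lemma SyzAux.localDepth_ses (sc : ShortComplex (ModuleCat S)) (hsc : sc.ShortExact) :
    min (localDepth S sc.X₂) (localDepth S sc.X₃ + 1) ≤ localDepth S sc.X₁ := by
  refine SyzAux.le_localDepth _ _ fun m hm => ?_
  refine SyzAux.ext_subsingleton_of_ses _ sc hsc m ?_ ?_
  · exact SyzAux.subsingleton_ext_of_lt_localDepth _ (lt_of_lt_of_le hm (min_le_left _ _))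
  · rintro m' rfl
    refine SyzAux.subsingleton_ext_of_lt_localDepth _ ?_
    have h3 : ((m' : ℕ∞) + 1) < localDepth S sc.X₃ + 1 := by
      have h4 := lt_of_lt_of_le hm (min_le_right _ _)
      have h5 : (((m' + 1 : ℕ)) : ℕ∞) = (m' : ℕ∞) + 1 := by push_cast; rfl
      rwa [h5] at h4
    exact (ENat.add_lt_add_iff_right (by simp)).1 h3

lemma SyzAux.localDepth_squeeze (sc : ShortComplex (ModuleCat S)) (hsc : sc.ShortExact) :
    min (localDepth S sc.X₁) (localDepth S sc.X₃) ≤ localDepth S sc.X₂ := by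
  refine SyzAux.le_localDepth _ _ fun m hm => ?_
  refine SyzAux.ext_subsingleton_of_ses₂ _ sc hsc m ?_ ?_
  · exact SyzAux.subsingleton_ext_of_lt_localDepth _ (lt_of_lt_of_le hm (min_le_left _ _))
  · exact SyzAux.subsingleton_ext_of_lt_localDepth _ (lt_of_lt_of_le hm (min_le_right _ _))

lemma SyzAux.localDepth_le_of_linearEquiv {N N' : Type} [AddCommGroup N] [Module S N]
    [AddCommGroup N'] [Module S N'] (e : N ≃ₗ[S] N') :
    localDepth S (ModuleCat.of S N) ≤ localDepth S (ModuleCat.of S N') := by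
  refine SyzAux.le_localDepth _ _ fun m hm => ?_
  exact SyzAux.ext_subsingleton_congr _ e.toModuleIso m
    (SyzAux.subsingleton_ext_of_lt_localDepth _ hm)

lemma SyzAux.localDepth_le_pow (r : ℕ) :
    localDepth S (ModuleCat.of S S) ≤ localDepth S (ModuleCat.of S (Fin r → S)) := by
  induction r with
  | zero =>
    refine le_trans le_top (SyzAux.le_localDepth _ ⊤ fun m _ => ?_)
    exact SyzAux.ext_subsingleton_of_subsingleton _ _ inferInstance m
  | succ r ih =>
    -- short exact sequence 0 → S → (Fin (r+1) → S) → (Fin r → S) → 0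
    set i : (S →ₗ[S] (Fin (r + 1) → S)) := LinearMap.single S (fun _ => S) (Fin.last r) with hi
    set p : ((Fin (r + 1) → S) →ₗ[S] (Fin r → S)) :=
      LinearMap.funLeft S S Fin.castSucc with hp
    have hzero : ∀ s : S, p (i s) = 0 := by
      intro s
      funext j
      simp only [hp, hi, LinearMap.funLeft_apply, LinearMap.coe_single, Pi.zero_apply]
      exact Pi.single_eq_of_ne (M := fun _ : Fin (r+1) => S) (Fin.castSucc_lt_last j).ne s
    set sc : ShortComplex (ModuleCat S) := ShortComplex.mk
      (show ModuleCat.of S S ⟶ ModuleCat.of S (Fin (r + 1) → S) from ModuleCat.ofHom i)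
      (show ModuleCat.of S (Fin (r + 1) → S) ⟶ ModuleCat.of S (Fin r → S) from ModuleCat.ofHom p)
      (ModuleCat.hom_ext (LinearMap.ext fun s => hzero s)) with hsc
    have hSE : sc.ShortExact := by
      refine { exact := ?_, mono_f := ?_, epi_g := ?_ }
      · rw [ShortComplex.moduleCat_exact_iff]
        intro x hx
        have x' : Fin (r + 1) → S := x
        have hx' : p (x : Fin (r + 1) → S) = 0 := hx
        refine ⟨(x : Fin (r + 1) → S) (Fin.last r), ?_⟩
        show i ((x : Fin (r + 1) → S) (Fin.last r)) = (x : Fin (r + 1) → S)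
        funext j
        simp only [hi, LinearMap.coe_single]
        refine Fin.lastCases ?_ (fun j' => ?_) j
        · exact Pi.single_eq_same _ _
        · have hj' : (x : Fin (r + 1) → S) (Fin.castSucc j') = 0 := congrFun hx' j'
          rw [hj']
          exact Pi.single_eq_of_ne (M := fun _ : Fin (r+1) => S) (Fin.castSucc_lt_last j').ne _
      · rw [ModuleCat.mono_iff_injective]
        intro a b hab
        have hab' : i (a : S) = i (b : S) := hab
        have h1 := congrFun hab' (Fin.last r)
        simp only [hi, LinearMap.coe_single, Pi.single_eq_same] at h1
        exact h1
      · rw [ModuleCat.epi_iff_surjective]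
        exact LinearMap.funLeft_surjective_of_injective S S _ (Fin.castSucc_injective r)
    have hsq := SyzAux.localDepth_squeeze sc hSE
    exact le_trans (le_min le_rfl ih) hsq

lemma SyzAux.localDepth_key {A B C : Type} [AddCommGroup A] [Module S A]
    [AddCommGroup B] [Module S B] [AddCommGroup C] [Module S C]
    [Module.Free S B] [Module.Finite S B]
    (f : A →ₗ[S] B) (g : B →ₗ[S] C) (hfinj : Function.Injective f)
    (hgsurj : Function.Surjective g) (hfg : Function.Exact f g) :
    min (localDepth S (ModuleCat.of S S)) (localDepth S (ModuleCat.of S C) + 1) ≤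
      localDepth S (ModuleCat.of S A) := by
  set sc : ShortComplex (ModuleCat S) := ShortComplex.mk
    (show ModuleCat.of S A ⟶ ModuleCat.of S B from ModuleCat.ofHom f)
    (show ModuleCat.of S B ⟶ ModuleCat.of S C from ModuleCat.ofHom g)
    (by ext a; exact (hfg (f a)).2 ⟨a, rfl⟩) with hsc
  have hSE : sc.ShortExact := by
    refine { exact := ?_, mono_f := ?_, epi_g := ?_ }
    · rw [ShortComplex.moduleCat_exact_iff]
      intro x hx
      exact (hfg (x : B)).1 hx
    · rw [ModuleCat.mono_iff_injective]; exact hfinj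
    · rw [ModuleCat.epi_iff_surjective]; exact hgsurj
  have hses := SyzAux.localDepth_ses sc hSE
  refine le_trans (min_le_min ?_ le_rfl) hses
  have e := (Module.finBasis S B).equivFun
  exact le_trans (SyzAux.localDepth_le_pow (Module.finrank S B))
    (SyzAux.localDepth_le_of_linearEquiv e.symm)

end SyzAux

noncomputable section Glue

open CategoryTheory

variable {R : Type} [CommRing R]

/-- The localized module `S⁻¹R` is isomorphic to the localization ring. -/
noncomputable def SyzAux.locSelf (p : PrimeSpectrum R) :
    LocalizedModule p.asIdeal.primeCompl R ≃ₗ[Localization.AtPrime p.asIdeal]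
      Localization.AtPrime p.asIdeal :=
  letI e0 := IsLocalizedModule.iso p.asIdeal.primeCompl
    (Algebra.linearMap R (Localization.AtPrime p.asIdeal))
  { e0.toLinearMap.extendScalarsOfIsLocalization p.asIdeal.primeCompl
      (Localization.AtPrime p.asIdeal) with
    invFun := e0.symm
    left_inv := e0.left_inv
    right_inv := e0.right_inv }

lemma SyzAux.serreCond_succ {n : ℕ} {N : ModuleCat R} (h : SerreCond R (n + 1) N) :
    SerreCond R n N := fun p =>
  le_trans (min_le_min (Nat.cast_le.2 (Nat.le_succ n)) le_rfl) (h p)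

theorem serreCond_of_isSyzygyOf' (n : ℕ)
    (hR : SerreCond R n (ModuleCat.of R R))
    (M : ModuleCat R) (hM : IsSyzygyOf R n M) :
    SerreCond R n M := by
  induction n generalizing M with
  | zero =>
    intro p
    have h0 : (min ((0 : ℕ) : ℕ∞) (primeHt p)) = 0 := by simp
    rw [h0]
    exact zero_le
  | succ n ih =>
    obtain ⟨P, f, hPfin, hPproj, hfinj, hsyz⟩ := hM
    have hC : SerreCond R n (ModuleCat.of R (↑P ⧸ LinearMap.range f)) :=
      ih (SyzAux.serreCond_succ hR) _ hsyz
    intro p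
    set pc := p.asIdeal.primeCompl with hpc
    set S := Localization.AtPrime p.asIdeal with hS
    set f' := LocalizedModule.map pc f with hf'
    set g0 := (LinearMap.range f).mkQ with hg0
    set g' := LocalizedModule.map pc g0 with hg'
    haveI : Module.FinitePresentation R ↑P := Module.finitePresentation_of_projective R ↑P
    haveI : Module.Flat R ↑P := Module.Flat.of_projective
    haveI hfree : Module.Free S (LocalizedModule pc ↑P) := by
      have h1 := Module.freeLocus_eq_univ (R := R) (M := ↑P)
      have h2 : p ∈ Module.freeLocus R ↑P := by rw [h1]; trivial
      exact h2
    haveI : Module.Finite S (LocalizedModule pc ↑P) :=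
      Module.Finite.of_isLocalizedModule pc (LocalizedModule.mkLinearMap pc ↑P)
    have hexact : Function.Exact ⇑f' ⇑g' :=
      IsLocalizedModule.map_exact pc (LocalizedModule.mkLinearMap pc ↑M)
        (LocalizedModule.mkLinearMap pc ↑P)
        (LocalizedModule.mkLinearMap pc (↑P ⧸ LinearMap.range f)) f g0
        (LinearMap.exact_map_mkQ_range f)
    have hinj' : Function.Injective ⇑f' := LocalizedModule.map_injective pc f hfinj
    have hsurj' : Function.Surjective ⇑g' :=
      LocalizedModule.map_surjective pc g0 (Submodule.mkQ_surjective _)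
    have hkey := SyzAux.localDepth_key (S := S) f' g' hinj' hsurj' hexact
    have hRS : min (((n + 1 : ℕ)) : ℕ∞) (primeHt p) ≤ localDepth S (ModuleCat.of S S) :=
      le_trans (hR p) (SyzAux.localDepth_le_of_linearEquiv (SyzAux.locSelf p))
    have hCd := hC p
    refine le_trans (le_min hRS ?_) hkey
    have harith : min (((n + 1 : ℕ)) : ℕ∞) (primeHt p) ≤ min ((n : ℕ∞)) (primeHt p) + 1 := by
      rw [← min_add_add_right]
      have hc : (((n + 1 : ℕ)) : ℕ∞) = (n : ℕ∞) + 1 := by push_cast; rfl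
      rw [hc]
      exact min_le_min le_rfl le_self_add
    exact le_trans harith (add_le_add_left hCd 1)

end Glue

/-- If `R` satisfies `(S_n)`, then every `n`-syzygy finitely generated module satisfies
`(S_n)`. -/
theorem serreCond_of_isSyzygyOf (R : Type) [CommRing R] [IsNoetherianRing R] (n : ℕ)
    (hR : SerreCond R n (ModuleCat.of R R))
    (M : ModuleCat R) (hfin : Module.Finite R M) (hM : IsSyzygyOf R n M) :
    SerreCond R n M :=
  serreCond_of_isSyzygyOf' n hR M hM
end

section
/- Let (R, m, k) be a noetherian local ring of depth at most n−1, and suppose Ext^j_R(Ext^n_R(k, R), R) = 0 for all integers j < n. Then Ext^n_R(k, R) = 0. -/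
open CategoryTheory IsLocalRing

section AuxLemmas

open CategoryTheory HomologicalComplex

/-- `homologyMap` is compatible with scalar multiplication. -/
lemma aux_homologyMap_smul {A : Type*} [Semiring A] {C : Type*} [Category C] [Preadditive C]
    [CategoryTheory.Linear A C] {ι : Type*} {c : ComplexShape ι}
    {K L : HomologicalComplex C c} (f : K ⟶ L) (r : A) (i : ι)
    [K.HasHomology i] [L.HasHomology i] :
    homologyMap (r • f) i = r • homologyMap f i := by
  have h : (shortComplexFunctor C c i).map (r • f) = r • (shortComplexFunctor C c i).map f :=
    ShortComplex.hom_ext _ _ rfl rfl rfl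
  change ShortComplex.homologyMap ((shortComplexFunctor C c i).map (r • f))
    = r • ShortComplex.homologyMap ((shortComplexFunctor C c i).map f)
  rw [h, ShortComplex.homologyMap_smul]

section LeftComp

variable {A : Type} [CommRing A] {C : Type*} [Category C] [Preadditive C]
  [CategoryTheory.Linear A C]

lemma aux_leftComp_comp {X X' X'' Z : C} (f : X' ⟶ X'') (g : X ⟶ X') :
    ModuleCat.ofHom (Linear.leftComp A Z f) ≫ ModuleCat.ofHom (Linear.leftComp A Z g)
      = ModuleCat.ofHom (Linear.leftComp A Z (g ≫ f)) := by
  ext φ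
  exact (Category.assoc g f φ).symm

lemma aux_leftComp_add {X Z : C} (f g : X ⟶ X) :
    ModuleCat.ofHom (Linear.leftComp A Z (f + g))
      = ModuleCat.ofHom (Linear.leftComp A Z f) + ModuleCat.ofHom (Linear.leftComp A Z g) := by
  ext φ
  exact Preadditive.add_comp _ _ _ f g φ

lemma aux_leftComp_zero {X X' Z : C} :
    ModuleCat.ofHom (Linear.leftComp A Z (0 : X ⟶ X')) = 0 := by
  ext φ
  exact Limits.zero_comp

lemma aux_leftComp_smul_id (r : A) (X Z : C) :
    ModuleCat.ofHom (Linear.leftComp A Z (r • 𝟙 X)) = r • 𝟙 (ModuleCat.of A (X ⟶ Z)) := by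
  ext φ
  show (r • 𝟙 X) ≫ φ = r • φ
  rw [Linear.smul_comp, Category.id_comp]

end LeftComp

/-- For `r` in the maximal ideal, multiplication by `r` annihilates `Ext^n(k, M)`. -/
lemma aux_smul_ext_zero (R : Type) [CommRing R] [IsLocalRing R] (n : ℕ) (r : R)
    (hr : r ∈ IsLocalRing.maximalIdeal R)
    (x : extMod R (ModuleCat.of R (IsLocalRing.ResidueField R)) (ModuleCat.of R R) n) :
    r • x = 0 := by
  classical
  obtain ⟨P⟩ := (inferInstance :
    HasProjectiveResolution (ModuleCat.of R (IsLocalRing.ResidueField R))).out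
  -- `r` annihilates the residue field
  have hres : ∀ y : IsLocalRing.ResidueField R, r • y = 0 := by
    intro y
    obtain ⟨z, rfl⟩ := Ideal.Quotient.mk_surjective y
    have hz : r • z ∈ IsLocalRing.maximalIdeal R := by
      rw [smul_eq_mul]; exact Ideal.mul_mem_right z _ hr
    exact (Ideal.Quotient.eq_zero_iff_mem.mpr (by simpa using hz) :
      (Ideal.Quotient.mk (IsLocalRing.maximalIdeal R) (r * z) : R ⧸ _) = 0)
  -- `r • 𝟙` on the resolution is a lift of the zero map
  have hπ : (r • 𝟙 P.complex) ≫ P.π = 0 := by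
    have h1 : (r • 𝟙 P.complex) ≫ P.π = r • P.π := by
      rw [Linear.smul_comp, Category.id_comp]
    rw [h1]
    apply HomologicalComplex.hom_ext
    intro i
    rcases i with _ | i
    · ext v
      show r • (P.π.f 0 v) = 0
      exact hres _
    · exact (HomologicalComplex.isZero_single_obj_X (ComplexShape.down ℕ) 0 (ModuleCat.of R (IsLocalRing.ResidueField R)) (i + 1)
        (by simp)).eq_of_tgt _ _
  let H : Homotopy (r • 𝟙 P.complex) 0 := CategoryTheory.ProjectiveResolution.liftHomotopyZero _ hπ
  set K := P.complex.linearYonedaObj R (ModuleCat.of R R) with hK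
  -- the induced homotopy on the Hom complex
  let hom : ∀ i j : ℕ, K.X i ⟶ K.X j := fun i j =>
    ModuleCat.ofHom (Linear.leftComp R (ModuleCat.of R R) (H.hom j i))
  have homd : ∀ i j : ℕ, K.d i j = ModuleCat.ofHom (Linear.leftComp R (ModuleCat.of R R) (P.complex.d j i)) :=
    fun i j => ChainComplex.linearYonedaObj_d P.complex R (ModuleCat.of R R) i j
  have hzero : ∀ i j : ℕ, ¬ (ComplexShape.up ℕ).Rel j i → hom i j = 0 := by
    intro i j hij
    have h0 : H.hom j i = 0 := H.zero j i (by simpa using hij)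
    show ModuleCat.ofHom (Linear.leftComp R (ModuleCat.of R R) (H.hom j i)) = 0
    rw [h0]
    exact aux_leftComp_zero
  have hcomm : ∀ i : ℕ, (r • 𝟙 K).f i = dNext i hom + prevD i hom + (0 : K ⟶ K).f i := by
    intro i
    have hid : (r • 𝟙 K).f i = r • 𝟙 (K.X i) := by
      rw [HomologicalComplex.smul_f_apply, HomologicalComplex.id_f]
    have hdn : dNext i hom = K.d i (i + 1) ≫ hom (i + 1) i := dNext_eq hom (by simp)
    have hz0 : (0 : K ⟶ K).f i = 0 := rfl
    rcases i with _ | i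
    · have hp : prevD 0 hom = 0 := prevD_eq_zero hom 0 (by simp)
      have hc := H.comm 0
      rw [dNext_eq_zero H.hom 0 (by simp),
        prevD_eq H.hom (show (ComplexShape.down ℕ).Rel 1 0 by simp)] at hc
      simp only [HomologicalComplex.zero_f_apply, add_zero, zero_add,
        HomologicalComplex.id_f] at hc
      -- hc : (r • 𝟙 P.complex).f 0 = H.hom 0 1 ≫ P.complex.d 1 0
      rw [hid, hdn, hp, hz0, add_zero, add_zero, homd, show hom 1 0 =
        ModuleCat.ofHom (Linear.leftComp R (ModuleCat.of R R) (H.hom 0 1)) from rfl]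
      erw [aux_leftComp_comp]
      rw [show P.complex.d 1 0 = P.complex.d 1 0 from rfl]
      rw [← hc]
      have : (r • 𝟙 P.complex).f 0 = r • 𝟙 (P.complex.X 0) := by
        rw [HomologicalComplex.smul_f_apply, HomologicalComplex.id_f]
      rw [this, aux_leftComp_smul_id]
      rfl
    · have hp : prevD (i + 1) hom = hom (i + 1) i ≫ K.d i (i + 1) :=
        prevD_eq hom (show (ComplexShape.up ℕ).Rel i (i + 1) by simp)
      have hc := H.comm (i + 1)
      rw [dNext_eq H.hom (show (ComplexShape.down ℕ).Rel (i + 1) i by simp),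
        prevD_eq H.hom (show (ComplexShape.down ℕ).Rel (i + 2) (i + 1) by simp)] at hc
      simp only [HomologicalComplex.zero_f_apply, add_zero,
        HomologicalComplex.id_f] at hc
      -- hc : (r • 𝟙 P.complex).f (i+1) = P.d (i+1) i ≫ H.hom i (i+1) + H.hom (i+1) (i+2) ≫ P.d (i+2) (i+1)
      have h1 : K.d (i + 1) (i + 2) ≫ hom (i + 2) (i + 1)
          = ModuleCat.ofHom (Linear.leftComp R (ModuleCat.of R R) (H.hom (i + 1) (i + 2) ≫ P.complex.d (i + 2) (i + 1))) := by
        rw [homd, show hom (i + 2) (i + 1)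
          = ModuleCat.ofHom (Linear.leftComp R (ModuleCat.of R R) (H.hom (i + 1) (i + 2))) from rfl,
          ]
        erw [aux_leftComp_comp]
      have h2 : hom (i + 1) i ≫ K.d i (i + 1)
          = ModuleCat.ofHom (Linear.leftComp R (ModuleCat.of R R) (P.complex.d (i + 1) i ≫ H.hom i (i + 1))) := by
        rw [homd, show hom (i + 1) i
          = ModuleCat.ofHom (Linear.leftComp R (ModuleCat.of R R) (H.hom i (i + 1))) from rfl,
          ]
        erw [aux_leftComp_comp]
      rw [hid, hdn, hp, hz0, add_zero, h1, h2]
      erw [← aux_leftComp_add]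
      have : (r • 𝟙 P.complex).f (i + 1) = r • 𝟙 (P.complex.X (i + 1)) := by
        rw [HomologicalComplex.smul_f_apply, HomologicalComplex.id_f]
      rw [← add_comm (P.complex.d (i + 1) i ≫ H.hom i (i + 1)) _, ← hc, this,
        aux_leftComp_smul_id]
      rfl
  let hKhtp : Homotopy (r • 𝟙 K) (0 : K ⟶ K) := ⟨hom, hzero, hcomm⟩
  have h1 : homologyMap (r • 𝟙 K) n = (0 : K.homology n ⟶ K.homology n) := by
    rw [hKhtp.homologyMap_eq n, homologyMap_zero]
  have h2 : (r • 𝟙 (K.homology n) : K.homology n ⟶ K.homology n) = 0 := by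
    calc (r • 𝟙 (K.homology n) : K.homology n ⟶ K.homology n)
        = r • homologyMap (𝟙 K) n := by rw [homologyMap_id]
      _ = homologyMap (r • 𝟙 K) n := (aux_homologyMap_smul _ _ _).symm
      _ = 0 := h1
  have hann : ∀ y : K.homology n, r • y = 0 := by
    intro y
    have h3 := congrArg (fun f => f.hom y) h2
    simpa only [ModuleCat.hom_smul, ModuleCat.hom_id, ModuleCat.hom_zero, LinearMap.smul_apply,
      LinearMap.id_coe, id_eq, LinearMap.zero_apply] using h3
  let e : extMod R (ModuleCat.of R (IsLocalRing.ResidueField R)) (ModuleCat.of R R) n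
      ≅ K.homology n := P.isoExt n (ModuleCat.of R R)
  have h3 : e.hom (r • x) = 0 := by
    rw [map_smul]
    exact hann _
  calc r • x = (e.hom ≫ e.inv) (r • x) := by rw [e.hom_inv_id]; rfl
    _ = e.inv (e.hom (r • x)) := rfl
    _ = e.inv 0 := by rw [h3]
    _ = 0 := map_zero _

end AuxLemmas

/-- If `(R, m, k)` is a noetherian local ring of depth at most `n - 1` and
`Ext^j_R(Ext^n_R(k, R), R) = 0` for all `j < n`, then `Ext^n_R(k, R) = 0`. -/
theorem ext_residue_vanishes (R : Type) [CommRing R] [IsLocalRing R] [IsNoetherianRing R] (n : ℕ)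
    (hdepth : localDepth R (ModuleCat.of R R) < (n : ℕ∞))
    (hvan : ∀ j : ℕ, j < n → Subsingleton (extMod R
      (extMod R (ModuleCat.of R (IsLocalRing.ResidueField R)) (ModuleCat.of R R) n)
      (ModuleCat.of R R) j)) :
    Subsingleton (extMod R (ModuleCat.of R (IsLocalRing.ResidueField R)) (ModuleCat.of R R) n) := by
  classical
  by_contra hE
  rw [not_subsingleton_iff_nontrivial] at hE
  -- extract a degree `m' < n` where `Ext^{m'}(k, R)` is nontrivial
  have hdepth' : sInf {q : ℕ∞ | ∃ m : ℕ, q = m ∧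
      Nontrivial (extMod R (ModuleCat.of R (IsLocalRing.ResidueField R))
        (ModuleCat.of R R) m)} < (n : ℕ∞) := hdepth
  obtain ⟨a, ⟨m', rfl, hnt⟩, hlt⟩ := sInf_lt_iff.mp hdepth'
  have hm' : m' < n := by exact_mod_cast hlt
  set E := extMod R (ModuleCat.of R (IsLocalRing.ResidueField R)) (ModuleCat.of R R) n with hEdef
  haveI hsubE := hvan m' hm'
  obtain ⟨x, hx⟩ := exists_ne (0 : E)
  -- `E` is a vector space over the residue field
  have htor : Module.IsTorsionBySet R E ((IsLocalRing.maximalIdeal R) : Set R) := by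
    intro y a
    exact aux_smul_ext_zero R n a.1 a.2 y
  letI : Module (IsLocalRing.ResidueField R) E := htor.module
  haveI : IsScalarTower R (IsLocalRing.ResidueField R) E := htor.isScalarTower
  -- a retraction `E → k`
  obtain ⟨q, hq⟩ := Submodule.exists_isCompl
    (Submodule.span (IsLocalRing.ResidueField R) ({x} : Set E))
  let eqv := LinearEquiv.toSpanNonzeroSingleton (IsLocalRing.ResidueField R) E x hx
  let p' : E →ₗ[IsLocalRing.ResidueField R] IsLocalRing.ResidueField R :=
    eqv.symm.toLinearMap ∘ₗ Submodule.linearProjOfIsCompl _ q hq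
  have hp'x : p' x = 1 := by
    have hmem : x ∈ Submodule.span (IsLocalRing.ResidueField R) ({x} : Set E) :=
      Submodule.mem_span_singleton_self x
    have h1 : (Submodule.linearProjOfIsCompl _ q hq) x
        = (⟨x, hmem⟩ : Submodule.span (IsLocalRing.ResidueField R) ({x} : Set E)) :=
      Submodule.linearProjOfIsCompl_apply_left hq
        (⟨x, hmem⟩ : Submodule.span (IsLocalRing.ResidueField R) ({x} : Set E))
    have h2 : eqv 1 = (⟨x, hmem⟩ : Submodule.span (IsLocalRing.ResidueField R) ({x} : Set E)) := by
      apply Subtype.ext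
      show ((eqv 1 : Submodule.span (IsLocalRing.ResidueField R) ({x} : Set E)) : E) = x
      rw [LinearEquiv.toSpanNonzeroSingleton_one]
    show eqv.symm ((Submodule.linearProjOfIsCompl _ q hq) x) = 1
    rw [h1, ← h2]
    exact eqv.symm_apply_apply 1
  let pmap : E ⟶ ModuleCat.of R (IsLocalRing.ResidueField R) :=
    ModuleCat.ofHom (p'.restrictScalars R : E →ₗ[R] IsLocalRing.ResidueField R)
  let f0 : R →ₗ[R] E := LinearMap.toSpanSingleton R E x
  have hker : IsLocalRing.maximalIdeal R ≤ LinearMap.ker f0 := by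
    intro a ha
    rw [LinearMap.mem_ker, LinearMap.toSpanSingleton_apply]
    exact aux_smul_ext_zero R n a ha x
  let smap : ModuleCat.of R (IsLocalRing.ResidueField R) ⟶ E :=
    ModuleCat.ofHom ((IsLocalRing.maximalIdeal R).liftQ f0 hker : IsLocalRing.ResidueField R →ₗ[R] E)
  have hsp : smap ≫ pmap = 𝟙 (ModuleCat.of R (IsLocalRing.ResidueField R)) := by
    ext y
    obtain ⟨a, rfl⟩ := Ideal.Quotient.mk_surjective y
    show pmap (smap (Ideal.Quotient.mk _ a)) = Ideal.Quotient.mk _ a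
    have h1 : smap (Ideal.Quotient.mk _ a) = a • x := by
      show (IsLocalRing.maximalIdeal R).liftQ f0 hker (Submodule.Quotient.mk a) = a • x
      rw [Submodule.liftQ_apply]
      exact LinearMap.toSpanSingleton_apply R E x a
    rw [h1, map_smul]
    have h2 : pmap x = (1 : IsLocalRing.ResidueField R) := hp'x
    rw [h2]
    show a • (1 : IsLocalRing.ResidueField R) = _
    show (Ideal.Quotient.mk _ a : IsLocalRing.ResidueField R) * 1 = _
    rw [mul_one]
  -- Ext is a functor: `Ext^{m'}(k, R)` is a retract of `Ext^{m'}(E, R)`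
  let F := Ext R (ModuleCat R) m'
  have hcomp : (F.map pmap.op).app (ModuleCat.of R R) ≫ (F.map smap.op).app (ModuleCat.of R R)
      = 𝟙 _ := by
    rw [← NatTrans.comp_app, ← F.map_comp, ← op_comp, hsp, op_id, F.map_id, NatTrans.id_app]
  have key : ∀ z : extMod R (ModuleCat.of R (IsLocalRing.ResidueField R)) (ModuleCat.of R R) m',
      (F.map smap.op).app (ModuleCat.of R R) ((F.map pmap.op).app (ModuleCat.of R R) z) = z :=
    fun z => congrArg (fun f => f.hom z) hcomp
  obtain ⟨a, b, hab⟩ := hnt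
  apply hab
  rw [← key a, ← key b,
    @Subsingleton.elim _ hsubE ((F.map pmap.op).app (ModuleCat.of R R) a)
      ((F.map pmap.op).app (ModuleCat.of R R) b)]
end

section
/- Every n-torsionfree finitely generated module over a commutative noetherian ring is an n-syzygy module. -/
open CategoryTheory IsLocalRing

noncomputable section AuslanderBridgerAux

open CategoryTheory LinearMap Submodule Module Limits

variable (R : Type) [CommRing R]

structure FreeCover (V : ModuleCat.{0} R) (N : Submodule R V) where
  F : ModuleCat.{0} R
  fin : Module.Finite R F
  free : Module.Free R F
  map : F →ₗ[R] V
  range_eq : LinearMap.range map = N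

lemma nonempty_freeCover [IsNoetherianRing R] (V : ModuleCat.{0} R) [Module.Finite R V]
    (N : Submodule R V) : Nonempty (FreeCover R V N) := by
  haveI : Module.Finite R N := Module.Finite.iff_fg.mpr (IsNoetherian.noetherian N)
  obtain ⟨c, s, hs⟩ := Module.Finite.exists_fin' R N
  exact ⟨⟨ModuleCat.of R (Fin c → R), (inferInstance : Module.Finite R (Fin c → R)),
    (inferInstance : Module.Free R (Fin c → R)), N.subtype ∘ₗ s, by
    rw [LinearMap.range_comp, LinearMap.range_eq_top.mpr hs, Submodule.map_top,
      Submodule.range_subtype]⟩⟩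

structure ResStep where
  V : ModuleCat.{0} R
  W : ModuleCat.{0} R
  d : V →ₗ[R] W
  fin : Module.Finite R V
  free : Module.Free R V

variable [IsNoetherianRing R]

def resNext (s : ResStep R) : ResStep R :=
  haveI := s.fin
  ⟨(nonempty_freeCover R s.V (LinearMap.ker s.d)).some.F, s.V,
   (nonempty_freeCover R s.V (LinearMap.ker s.d)).some.map,
   (nonempty_freeCover R s.V (LinearMap.ker s.d)).some.fin,
   (nonempty_freeCover R s.V (LinearMap.ker s.d)).some.free⟩

lemma resNext_range (s : ResStep R) :
    LinearMap.range (resNext R s).d = LinearMap.ker s.d := by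
  haveI := s.fin
  exact (nonempty_freeCover R s.V (LinearMap.ker s.d)).some.range_eq

def resT (s₀ : ResStep R) : ℕ → ResStep R
  | 0 => s₀
  | k+1 => resNext R (resT s₀ k)

def resX (s₀ : ResStep R) : ℕ → ModuleCat.{0} R
  | 0 => s₀.W
  | k+1 => (resT R s₀ k).V

def resD (s₀ : ResStep R) : ∀ k, resX R s₀ (k+1) →ₗ[R] resX R s₀ k
  | 0 => s₀.d
  | k+1 => (resT R s₀ (k+1)).d

lemma resD_range (s₀ : ResStep R) (k : ℕ) :
    LinearMap.range (resD R s₀ (k+1)) = LinearMap.ker (resD R s₀ k) := by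
  cases k with
  | zero => exact resNext_range R s₀
  | succ j => exact resNext_range R (resT R s₀ (j+1))

def resComplex (s₀ : ResStep R) : ChainComplex (ModuleCat.{0} R) ℕ :=
  ChainComplex.of (resX R s₀) (fun k => ModuleCat.ofHom (resD R s₀ k)) (fun k => by
    ext x
    have : resD R s₀ (k+1) x ∈ LinearMap.ker (resD R s₀ k) := by
      rw [← resD_range R s₀ k]; exact ⟨x, rfl⟩
    exact this)

variable (s₀ : ResStep R) (Z : ModuleCat.{0} R) (π : s₀.W →ₗ[R] Z)
  (hsurj : Function.Surjective π) (hker : LinearMap.ker π = LinearMap.range s₀.d)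
  (hWproj : Module.Projective R s₀.W)

lemma resComplex_exactAt_succ (k : ℕ) : (resComplex R s₀).ExactAt (k+1) := by
  rw [HomologicalComplex.exactAt_iff' _ (k+2) (k+1) k (by simp) (by simp)]
  rw [ShortComplex.moduleCat_exact_iff_range_eq_ker]
  show LinearMap.range ((resComplex R s₀).d (k+2) (k+1)).hom
      = LinearMap.ker ((resComplex R s₀).d (k+1) k).hom
  rw [show (resComplex R s₀).d (k+2) (k+1) = ModuleCat.ofHom (resD R s₀ (k+1)) by simp [resComplex, ChainComplex.of.d]; rfl,
    show (resComplex R s₀).d (k+1) k = ModuleCat.ofHom (resD R s₀ k) by simp [resComplex, ChainComplex.of.d]; rfl]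
  exact resD_range R s₀ k

def resProjectiveResolution : ProjectiveResolution Z where
  complex := resComplex R s₀
  projective := by
    rintro (_|k)
    · show Projective (s₀.W)
      have := (IsProjective.iff_projective (R := R) (P := s₀.W)).mp hWproj
      exact this
    · show Projective ((resT R s₀ k).V)
      haveI := (resT R s₀ k).fin
      haveI := (resT R s₀ k).free
      have : Module.Projective R ((resT R s₀ k).V) := inferInstance
      have := (IsProjective.iff_projective (R := R) (P := (resT R s₀ k).V)).mp this
      exact this
  π := (ChainComplex.toSingle₀Equiv _ _).symm ⟨ModuleCat.ofHom π, by
      have : (resComplex R s₀).d 1 0 = ModuleCat.ofHom (resD R s₀ 0) := by simp [resComplex, ChainComplex.of.d]; rfl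
      rw [this]
      ext x
      have : (resD R s₀ 0) x ∈ LinearMap.ker π := by
        rw [hker]; exact ⟨x, rfl⟩
      exact this⟩
  quasiIso := ⟨fun i => by
    cases i with
    | zero =>
      rw [ChainComplex.quasiIsoAt₀_iff, ShortComplex.quasiIso_iff_of_zeros']
      · have w : (resComplex R s₀).d 1 0 ≫ (ModuleCat.ofHom π : (resComplex R s₀).X 0 ⟶ Z) = 0 := by
          rw [show (resComplex R s₀).d 1 0 = ModuleCat.ofHom (resD R s₀ 0) by simp [resComplex, ChainComplex.of.d]; rfl]
          ext x
          exact (show resD R s₀ 0 x ∈ LinearMap.ker π by rw [hker]; exact ⟨x, rfl⟩)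
        have hS' : (ShortComplex.mk ((resComplex R s₀).d 1 0)
            (ModuleCat.ofHom π : (resComplex R s₀).X 0 ⟶ Z) w).Exact := by
          rw [ShortComplex.moduleCat_exact_iff_range_eq_ker]
          show LinearMap.range ((resComplex R s₀).d 1 0).hom = LinearMap.ker (ModuleCat.ofHom π).hom
          rw [show (resComplex R s₀).d 1 0 = ModuleCat.ofHom (resD R s₀ 0) by simp [resComplex, ChainComplex.of.d]; rfl]
          exact hker.symm
        have hepi : Epi (ShortComplex.mk ((resComplex R s₀).d 1 0)
            (ModuleCat.ofHom π : (resComplex R s₀).X 0 ⟶ Z) w).g :=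
          (ModuleCat.epi_iff_surjective _).mpr hsurj
        refine (ShortComplex.exact_and_epi_g_iff_of_iso ?_).2 ⟨hS', hepi⟩
        exact ShortComplex.isoMk (Iso.refl _) (Iso.refl _) (Iso.refl _)
          (by rfl) (by rfl)
      all_goals rfl
    | succ k =>
      rw [quasiIsoAt_iff_exactAt']
      · exact resComplex_exactAt_succ R s₀ k
      · apply ChainComplex.exactAt_succ_single_obj⟩

open Module in
lemma dual_exact (j : ℕ)
    (hz : Limits.IsZero (((resComplex R s₀).linearYonedaObj R (ModuleCat.of R R)).homology (j+1))) :
    LinearMap.ker ((resD R s₀ (j+1)).dualMap) = LinearMap.range ((resD R s₀ j).dualMap) := by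
  have hex : ((((resComplex R s₀).linearYonedaObj R (ModuleCat.of R R))).sc' j (j+1) (j+2)).Exact := by
    rw [← HomologicalComplex.exactAt_iff' _ j (j+1) (j+2) (by simp) (by simp),
      HomologicalComplex.exactAt_iff_isZero_homology]
    exact hz
  rw [ShortComplex.moduleCat_exact_iff] at hex
  apply le_antisymm
  · intro φ hφ
    have hφ' : (φ : Module.Dual R (resX R s₀ (j+1))).comp (resD R s₀ (j+1)) = 0 := hφ
    obtain ⟨ψ, hψ⟩ := hex (ModuleCat.ofHom φ : (resX R s₀ (j+1)) ⟶ ModuleCat.of R R) (by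
      show (resComplex R s₀).d (j+2) (j+1) ≫ ModuleCat.ofHom φ = 0
      rw [show (resComplex R s₀).d (j+2) (j+1) = ModuleCat.ofHom (resD R s₀ (j+1)) by simp [resComplex, ChainComplex.of.d]; rfl]
      ext x; exact LinearMap.congr_fun hφ' x)
    refine ⟨ψ.hom, ?_⟩
    have : (resComplex R s₀).d (j+1) j ≫ ψ = ModuleCat.ofHom φ := hψ
    rw [show (resComplex R s₀).d (j+1) j = ModuleCat.ofHom (resD R s₀ j) by simp [resComplex, ChainComplex.of.d]; rfl] at this
    exact congrArg ModuleCat.Hom.hom this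
  · rintro φ ⟨ψ, rfl⟩
    show (ψ.comp (resD R s₀ j)).comp (resD R s₀ (j+1)) = 0
    rw [LinearMap.comp_assoc]
    have : (resD R s₀ j).comp (resD R s₀ (j+1)) = 0 := by
      ext x
      exact (show resD R s₀ (j+1) x ∈ LinearMap.ker (resD R s₀ j) by
        rw [← resD_range R s₀ j]; exact ⟨x, rfl⟩)
    rw [this, LinearMap.comp_zero]

universe uu vv

lemma isSyzygyOf_transfer (R : Type) [CommRing R] :
    ∀ (n : ℕ) (N : ModuleCat.{0} R), IsSyzygyOf.{0} R n N →
      ∀ (M : ModuleCat.{uu} R), (↑M ≃ₗ[R] ↑N) → IsSyzygyOf.{uu} R n M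
  | 0, _, _, _, _ => trivial
  | (n+1), N, ⟨P, F, h1, h2, h3, h4⟩, M, e => by
    haveI := h1; haveI := h2
    let f' : ↑M →ₗ[R] ULift.{uu} ↑P :=
      (ULift.moduleEquiv.symm : ↑P ≃ₗ[R] ULift ↑P).toLinearMap ∘ₗ (F ∘ₗ (e : ↑M →ₗ[R] ↑N))
    have hmap : Submodule.map ((ULift.moduleEquiv : ULift.{uu} ↑P ≃ₗ[R] ↑P)
        : ULift.{uu} ↑P →ₗ[R] ↑P) (LinearMap.range f') = LinearMap.range F := by
      ext y
      simp only [Submodule.mem_map, LinearMap.mem_range]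
      constructor
      · rintro ⟨x, ⟨m, rfl⟩, rfl⟩
        exact ⟨e m, by simp [f']⟩
      · rintro ⟨z, rfl⟩
        exact ⟨f' (e.symm z), ⟨e.symm z, rfl⟩, by simp [f']⟩
    refine ⟨ModuleCat.of R (ULift.{uu} ↑P), f', Module.Finite.ulift,
      Module.Projective.of_equiv (ULift.moduleEquiv.symm : ↑P ≃ₗ[R] ULift ↑P), ?_, ?_⟩
    · exact ULift.moduleEquiv.symm.injective.comp (h3.comp e.injective)
    · exact isSyzygyOf_transfer R n (ModuleCat.of R (↑P ⧸ LinearMap.range F)) h4 _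
        (Submodule.Quotient.equiv (LinearMap.range f') (LinearMap.range F)
          (ULift.moduleEquiv : ULift.{uu} ↑P ≃ₗ[R] ↑P) hmap)

lemma syzygy_chain (R : Type) [CommRing R] : ∀ (n : ℕ) (V : ℕ → ModuleCat.{0} R)
    (d : ∀ k, V k →ₗ[R] V (k+1))
    (_ : ∀ k, k < n → Module.Finite R (V (k+1)))
    (_ : ∀ k, k < n → Module.Projective R (V (k+1)))
    (_ : ∀ k, k + 1 < n → LinearMap.ker (d (k+1)) = LinearMap.range (d k)),
    IsSyzygyOf.{0} R n (ModuleCat.of R (V 0 ⧸ LinearMap.ker (d 0)))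
  | 0, _, _, _, _, _ => trivial
  | (n+1), V, d, hfin, hproj, hex => by
    refine ⟨V 1, (LinearMap.ker (d 0)).liftQ (d 0) le_rfl, hfin 0 (by omega),
      hproj 0 (by omega), ?_, ?_⟩
    · rw [← LinearMap.ker_eq_bot]
      exact Submodule.ker_liftQ_eq_bot _ _ _ le_rfl
    · rw [Submodule.range_liftQ]
      cases n with
      | zero => trivial
      | succ m =>
        rw [← hex 0 (by omega)]
        exact syzygy_chain R (m+1) (fun k => V (k+1)) (fun k => d (k+1))
          (fun k _ => hfin (k+1) (by omega)) (fun k _ => hproj (k+1) (by omega))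
          (fun k _ => hex (k+1) (by omega))

section Glue

variable (P0 P1 : ModuleCat.{0} R) [Module.Finite R P0] [Module.Free R P0]
  [Module.Finite R P1] [Module.Free R P1] (f : P1 →ₗ[R] P0)

def startStep : ResStep R :=
  ⟨ModuleCat.of R (Module.Dual R P0), ModuleCat.of R (Module.Dual R P1), f.dualMap,
    (inferInstance : Module.Finite R (Module.Dual R P0)),
    (inferInstance : Module.Free R (Module.Dual R P0))⟩

lemma main_glue (n : ℕ) (hn : 1 ≤ n) (M : ModuleCat.{uu} R) (g : P0 →ₗ[R] M)
    (hsurj : Function.Surjective g) (hkerg : LinearMap.range f = LinearMap.ker g)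
    (hex : ∀ j, j + 1 ≤ n →
      LinearMap.ker ((resD R (startStep R P0 P1 f) (j+1)).dualMap)
        = LinearMap.range ((resD R (startStep R P0 P1 f) j).dualMap)) :
    IsSyzygyOf.{uu} R n M := by
  set s₀ := startStep R P0 P1 f with hs₀
  have main := syzygy_chain R n (fun k => ModuleCat.of R (Module.Dual R (resX R s₀ (k+1))))
    (fun k => (resD R s₀ (k+1)).dualMap)
    (fun k _ => by
      haveI := (resT R s₀ (k+1)).fin
      haveI := (resT R s₀ (k+1)).free
      exact (inferInstance : Module.Finite R (Module.Dual R ((resT R s₀ (k+1)).V))))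
    (fun k _ => by
      haveI := (resT R s₀ (k+1)).fin
      haveI := (resT R s₀ (k+1)).free
      exact (inferInstance : Module.Projective R (Module.Dual R ((resT R s₀ (k+1)).V))))
    (fun k hk => hex (k+1) (by omega))
  refine isSyzygyOf_transfer R n _ main M ?_
  have hmap : Submodule.map ((Module.evalEquiv R P0 : P0 ≃ₗ[R] Module.Dual R (Module.Dual R P0))
      : P0 →ₗ[R] Module.Dual R (Module.Dual R P0)) (LinearMap.range f)
      = LinearMap.ker ((resD R s₀ 1).dualMap) := by
    rw [hex 0 hn]
    show Submodule.map (Module.evalEquiv R P0).toLinearMap (LinearMap.range f)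
      = LinearMap.range (f.dualMap.dualMap)
    rw [← LinearMap.range_comp, Module.evalEquiv_toLinearMap, ← Module.Dual.eval_naturality,
      LinearMap.range_comp, Module.erange_coe, Submodule.map_top]
  exact ((LinearMap.quotKerEquivOfSurjective g hsurj).symm.trans
    (Submodule.quotEquivOfEq _ _ hkerg.symm)).trans
    (Submodule.Quotient.equiv (LinearMap.range f) _
      (Module.evalEquiv R P0 : P0 ≃ₗ[R] Module.Dual R (Module.Dual R P0)) hmap)

end Glue

end AuslanderBridgerAux

/-- Auslander–Bridger: every `n`-torsionfree finitely generated module is `n`-syzygy. -/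
theorem isSyzygyOf_of_isTorsionfreeOf (R : Type) [CommRing R] [IsNoetherianRing R] (n : ℕ)
    (M : ModuleCat R) (hfin : Module.Finite R M) (h : IsTorsionfreeOf R n M) :
    IsSyzygyOf R n M := by
  cases n with
  | zero => trivial
  | succ n0 =>
    classical
    obtain ⟨a, g0, hg0⟩ := Module.Finite.exists_fin' R M
    haveI : Module.Finite R (LinearMap.ker g0) :=
      Module.Finite.iff_fg.mpr (IsNoetherian.noetherian _)
    obtain ⟨b, s, hs⟩ := Module.Finite.exists_fin' R (LinearMap.ker g0)
    let P0 : ModuleCat.{0} R := ModuleCat.of R (Fin a → R)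
    let P1 : ModuleCat.{0} R := ModuleCat.of R (Fin b → R)
    let f : P1 →ₗ[R] P0 := (LinearMap.ker g0).subtype ∘ₗ s
    have hrange : LinearMap.range f = LinearMap.ker g0 := by
      rw [LinearMap.range_comp, LinearMap.range_eq_top.mpr hs, Submodule.map_top,
        Submodule.range_subtype]
    haveI : Module.Finite R P0 := (inferInstance : Module.Finite R (Fin a → R))
    haveI : Module.Free R P0 := (inferInstance : Module.Free R (Fin a → R))
    haveI : Module.Finite R P1 := (inferInstance : Module.Finite R (Fin b → R))
    haveI : Module.Free R P1 := (inferInstance : Module.Free R (Fin b → R))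
    let pres : FinProjPres R M :=
      ⟨P0, P1, inferInstance, inferInstance, inferInstance, inferInstance, f, g0, hg0, hrange⟩
    let s₀ := startStep R P0 P1 f
    let π : s₀.W →ₗ[R] pres.Tr := (LinearMap.range f.dualMap).mkQ
    have hπsurj : Function.Surjective π := Submodule.mkQ_surjective (LinearMap.range f.dualMap)
    have hπker : LinearMap.ker π = LinearMap.range s₀.d := Submodule.ker_mkQ _
    let Res : CategoryTheory.ProjectiveResolution pres.Tr :=
      resProjectiveResolution R s₀ pres.Tr π hπsurj hπker
        (inferInstance : Module.Projective R (Module.Dual R P1))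
    refine main_glue R P0 P1 f (n0+1) (by omega) M g0 hg0 hrange (fun j hj => ?_)
    refine dual_exact R s₀ j ?_
    haveI hsub : Subsingleton (extMod R pres.Tr (ModuleCat.of R R) (j+1)) :=
      h pres (j+1) (by omega) (by omega)
    exact (ModuleCat.isZero_of_subsingleton
      (extMod R pres.Tr (ModuleCat.of R R) (j+1))).of_iso
      (Res.isoExt (j+1) (ModuleCat.of R R)).symm
end

section
/- Let R be a commutative noetherian ring and n ≥ 0. If syz_n(R) = S_n(R), then R satisfies (S_n) and syz_n(R) is closed under extensions. -/
open CategoryTheory IsLocalRing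

namespace SyzProofAux
open CategoryTheory Limits

universe v v' w w'

variable {A : Type} [CommRing A]

/-- Postcomposition map on Hom complexes. -/
noncomputable def postMap (X : ChainComplex (ModuleCat A) ℕ) {Y Z : ModuleCat A} (φ : Y ⟶ Z) :
    X.linearYonedaObj A Y ⟶ X.linearYonedaObj A Z where
  f i := ModuleCat.ofHom (Linear.rightComp A (X.X i) φ)
  comm' i j _ := by
    ext (ψ : X.X i ⟶ Y)
    simp [ChainComplex.linearYonedaObj_d]
    change X.d j i ≫ (ψ ≫ φ) = (X.d j i ≫ ψ) ≫ φ
    exact (Category.assoc _ _ _).symm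

lemma subsingleton_of_isZero {M : ModuleCat A} (h : IsZero M) : Subsingleton M := by
  have e := h.iso (ModuleCat.isZero_of_subsingleton (ModuleCat.of A PUnit))
  exact e.toLinearEquiv.toEquiv.subsingleton

lemma ext_subsingleton_of_ses (K : ModuleCat A) {L M N : ModuleCat A}
    (f : L →ₗ[A] M) (g : M →ₗ[A] N) (hf : Function.Injective f) (hg : Function.Surjective g)
    (hex : Function.Exact f g) (m : ℕ)
    (h1 : Subsingleton (extMod A K L m)) (h3 : Subsingleton (extMod A K N m)) :
    Subsingleton (extMod A K M m) := by
  obtain ⟨P⟩ : Nonempty (ProjectiveResolution K) := HasProjectiveResolution.out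
  have hfg : (ModuleCat.ofHom f) ≫ (ModuleCat.ofHom g) = 0 := by
    ext x; exact hex.apply_apply_eq_zero x
  set Scx : ShortComplex (CochainComplex (ModuleCat A) ℕ) :=
    ShortComplex.mk (postMap P.complex (ModuleCat.ofHom f)) (postMap P.complex (ModuleCat.ofHom g))
      (by
        ext i (ψ : P.complex.X i ⟶ L)
        show (ψ ≫ ModuleCat.ofHom f) ≫ ModuleCat.ofHom g = 0
        rw [Category.assoc, hfg, Limits.comp_zero]) with hScx
  have hses : Scx.ShortExact := by
    rw [HomologicalComplex.shortExact_iff_degreewise_shortExact]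
    intro i
    have hproj : Projective (P.complex.X i) := P.projective i
    have hepi : Epi (ModuleCat.ofHom g) := (ModuleCat.epi_iff_surjective _).mpr hg
    refine ShortComplex.ShortExact.mk' ?_ ?_ ?_
    · rw [ShortComplex.moduleCat_exact_iff]
      intro (ψ : P.complex.X i ⟶ M) hψ
      have hψ' : ψ ≫ ModuleCat.ofHom g = 0 := hψ
      have hmem : ∀ x, ψ x ∈ LinearMap.range f := by
        intro x
        rw [← LinearMap.exact_iff.mp hex]
        exact LinearMap.mem_ker.mpr (ConcreteCategory.congr_hom hψ' x)
      refine ⟨ModuleCat.ofHom (((LinearEquiv.ofInjective f hf).symm.toLinearMap).comp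
        (LinearMap.codRestrict (LinearMap.range f) ψ.hom hmem)), ?_⟩
      show _ ≫ ModuleCat.ofHom f = ψ
      ext x
      exact congrArg Subtype.val
        ((LinearEquiv.ofInjective f hf).apply_symm_apply ⟨ψ x, hmem x⟩)
    · rw [ModuleCat.mono_iff_injective]
      intro ψ₁ ψ₂ hh
      have hh' : ψ₁ ≫ ModuleCat.ofHom f = ψ₂ ≫ ModuleCat.ofHom f := hh
      exact ModuleCat.hom_ext (LinearMap.ext fun x => hf (ConcreteCategory.congr_hom hh' x))
    · rw [ModuleCat.epi_iff_surjective]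
      intro (ψ : P.complex.X i ⟶ N)
      obtain ⟨χ, hχ⟩ := Projective.factors ψ (ModuleCat.ofHom g)
      exact ⟨χ, hχ⟩
  have h2 := hses.homology_exact₂ m
  have z1 : IsZero ((P.complex.linearYonedaObj A L).homology m) :=
    IsZero.of_iso (@ModuleCat.isZero_of_subsingleton A _ _ h1) (P.isoExt m L).symm
  have z3 : IsZero ((P.complex.linearYonedaObj A N).homology m) :=
    IsZero.of_iso (@ModuleCat.isZero_of_subsingleton A _ _ h3) (P.isoExt m N).symm
  have z2 : IsZero ((P.complex.linearYonedaObj A M).homology m) := by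
    apply h2.isZero_X₂
    · exact z1.eq_of_src _ _
    · exact z3.eq_of_tgt _ _
  exact subsingleton_of_isZero (IsZero.of_iso z2 (P.isoExt m M))

/-- The depth lemma. -/
lemma min_localDepth_le (A : Type) [CommRing A] [IsLocalRing A] {L M N : ModuleCat A}
    (f : L →ₗ[A] M) (g : M →ₗ[A] N) (hf : Function.Injective f) (hg : Function.Surjective g)
    (hex : Function.Exact f g) :
    min (localDepth A L) (localDepth A N) ≤ localDepth A M := by
  apply le_sInf
  rintro x ⟨m, rfl, hm⟩
  by_contra hc
  push_neg at hc
  rw [lt_min_iff] at hc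
  have key : ∀ (X : ModuleCat A), (m : ℕ∞) < localDepth A X →
      Subsingleton (extMod A (ModuleCat.of A (IsLocalRing.ResidueField A)) X m) := by
    intro X hX
    rw [← not_nontrivial_iff_subsingleton]
    intro hnt
    exact absurd (sInf_le ⟨m, rfl, hnt⟩ : localDepth A X ≤ (m : ℕ∞)) (not_le.mpr hX)
  have := ext_subsingleton_of_ses (ModuleCat.of A (IsLocalRing.ResidueField A)) f g hf hg hex m
    (key L hc.1) (key N hc.2)
  exact absurd hm (not_nontrivial_iff_subsingleton.mpr this)

lemma isSyzygyOf_of_subsingleton (R : Type) [CommRing R] :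
    ∀ (n : ℕ) (M : ModuleCat.{v, 0} R), Subsingleton M → IsSyzygyOf.{v} R n M
  | 0, _, _ => trivial
  | n+1, M, hs => by
    refine ⟨ModuleCat.of R PUnit, 0, inferInstance, inferInstance,
      fun a b _ => Subsingleton.elim a b, ?_⟩
    exact isSyzygyOf_of_subsingleton R n _
      ((Submodule.Quotient.mk_surjective _).subsingleton)

lemma isSyzygyOf_self (R : Type) [CommRing R] :
    ∀ n, IsSyzygyOf.{0} R n (ModuleCat.of R R)
  | 0 => trivial
  | n+1 => by
    refine ⟨ModuleCat.of R R, LinearMap.id, inferInstanceAs (Module.Finite R R),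
      inferInstanceAs (Module.Projective R R), fun a b hab => hab, ?_⟩
    exact isSyzygyOf_of_subsingleton.{0} R n _
      ((Submodule.Quotient.subsingleton_iff).mpr LinearMap.range_id)

lemma isSyzygyOf_equiv (R : Type) [CommRing R] :
    ∀ (n : ℕ) (M : ModuleCat.{v, 0} R) (M' : ModuleCat.{w, 0} R)
      (_ : M ≃ₗ[R] M'), IsSyzygyOf.{v} R n M → IsSyzygyOf.{w} R n M'
  | 0, _, _, _, _ => trivial
  | n+1, M, M', e, hM => by
    obtain ⟨P, f, fin, proj, inj, hrest⟩ := hM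
    haveI := fin
    haveI := proj
    haveI : Small.{w} P := by
      obtain ⟨k, s, hs⟩ := Module.Finite.exists_fin' R P
      exact small_of_surjective hs
    let eP : Shrink.{w} P ≃ₗ[R] P := Shrink.linearEquiv R P
    let f' : M' →ₗ[R] (ModuleCat.of R (Shrink.{w} P)) :=
      (eP.symm.toLinearMap.comp f).comp e.symm.toLinearMap
    refine ⟨ModuleCat.of R (Shrink.{w} P), f', Module.Finite.equiv eP.symm,
      Module.Projective.of_equiv eP.symm, ?_, ?_⟩
    · intro a b hab
      simp only [f', LinearMap.coe_comp, Function.comp_apply, LinearEquiv.coe_coe] at hab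
      exact e.symm.injective (inj (eP.symm.injective hab))
    · have h1 : LinearMap.range f' = LinearMap.range (eP.symm.toLinearMap.comp f) :=
        LinearMap.range_comp_of_range_eq_top (eP.symm.toLinearMap.comp f)
          (LinearMap.range_eq_top.mpr e.symm.surjective)
      have h2 : LinearMap.range (eP.symm.toLinearMap.comp f)
          = Submodule.map eP.symm.toLinearMap (LinearMap.range f) :=
        LinearMap.range_comp _ _
      have hmap : Submodule.map (eP.symm.toLinearMap : P →ₗ[R] Shrink.{w} P) (LinearMap.range f)
          = LinearMap.range f' := by
        rw [h1, h2]
      exact isSyzygyOf_equiv R n _ _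
        (Submodule.Quotient.equiv (LinearMap.range f) (LinearMap.range f') eP.symm hmap) hrest

lemma small_of_finite (R : Type) [CommRing R] (M : Type v) [AddCommGroup M] [Module R M]
    [Module.Finite R M] : Small.{0} M := by
  obtain ⟨k, s, hs⟩ := Module.Finite.exists_fin' R M
  exact small_of_surjective hs

end SyzProofAux

/-- If `syz_n(R) = S_n(R)`, then `R` satisfies `(S_n)` and `syz_n(R)` is closed under
extensions. -/
theorem syz_eq_serre_implies (R : Type) [CommRing R] [IsNoetherianRing R] (n : ℕ)
    (h : ∀ M : ModuleCat R, Module.Finite R M → (IsSyzygyOf R n M ↔ SerreCond R n M)) :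
    SerreCond R n (ModuleCat.of R R) ∧
      ∀ (L M N : ModuleCat R), Module.Finite R L → Module.Finite R M → Module.Finite R N →
        ∀ (f : L →ₗ[R] M) (g : M →ₗ[R] N), Function.Injective f → Function.Surjective g →
          LinearMap.range f = LinearMap.ker g →
          IsSyzygyOf R n L → IsSyzygyOf R n N → IsSyzygyOf R n M := by
  constructor
  · exact (h (ModuleCat.of R R) (inferInstanceAs (Module.Finite R R))).mp (SyzProofAux.isSyzygyOf_self R n)
  · intro L M N finL finM finN f g hf hg hex hsL hsN
    haveI := finL; haveI := finM; haveI := finN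
    haveI : Small.{0} L := SyzProofAux.small_of_finite R L
    haveI : Small.{0} M := SyzProofAux.small_of_finite R M
    haveI : Small.{0} N := SyzProofAux.small_of_finite R N
    let eL : Shrink.{0} L ≃ₗ[R] L := Shrink.linearEquiv R L
    let eM : Shrink.{0} M ≃ₗ[R] M := Shrink.linearEquiv R M
    let eN : Shrink.{0} N ≃ₗ[R] N := Shrink.linearEquiv R N
    let L₀ : ModuleCat R := ModuleCat.of R (Shrink.{0} L)
    let M₀ : ModuleCat R := ModuleCat.of R (Shrink.{0} M)
    let N₀ : ModuleCat R := ModuleCat.of R (Shrink.{0} N)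
    let f₀ : L₀ →ₗ[R] M₀ := (eM.symm.toLinearMap.comp f).comp eL.toLinearMap
    let g₀ : M₀ →ₗ[R] N₀ := (eN.symm.toLinearMap.comp g).comp eM.toLinearMap
    have hf₀ : Function.Injective f₀ := by
      intro a b hab
      simp only [f₀, LinearMap.coe_comp, Function.comp_apply, LinearEquiv.coe_coe] at hab
      exact eL.injective (hf (eM.symm.injective hab))
    have hg₀ : Function.Surjective g₀ := by
      intro y
      obtain ⟨x, hx⟩ := hg (eN (y))
      refine ⟨eM.symm x, ?_⟩
      show eN.symm (g (eM (eM.symm x))) = y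
      rw [LinearEquiv.apply_symm_apply, hx, LinearEquiv.symm_apply_apply]
    have hexf : Function.Exact f g := LinearMap.exact_iff.mpr hex.symm
    have hex₀ : Function.Exact f₀ g₀ := by
      refine Function.Exact.of_ladder_linearEquiv_of_exact
        (e₁ := eL.symm) (e₂ := eM.symm) (e₃ := eN.symm) (f₁₂ := f) (f₂₃ := g) ?_ ?_ hexf
      · refine LinearMap.ext fun x => ?_
        show eM.symm (f (eL (eL.symm x))) = eM.symm (f x)
        rw [LinearEquiv.apply_symm_apply]
      · refine LinearMap.ext fun x => ?_
        show eN.symm (g (eM (eM.symm x))) = eN.symm (g x)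
        rw [LinearEquiv.apply_symm_apply]
    have hsL₀ : IsSyzygyOf.{0} R n L₀ := SyzProofAux.isSyzygyOf_equiv R n L L₀ eL.symm hsL
    have hsN₀ : IsSyzygyOf.{0} R n N₀ := SyzProofAux.isSyzygyOf_equiv R n N N₀ eN.symm hsN
    have finL₀ : Module.Finite R L₀ := Module.Finite.equiv eL.symm
    have finM₀ : Module.Finite R M₀ := Module.Finite.equiv eM.symm
    have finN₀ : Module.Finite R N₀ := Module.Finite.equiv eN.symm
    have hL := (h L₀ finL₀).mp hsL₀
    have hN := (h N₀ finN₀).mp hsN₀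
    have hserre : SerreCond R n M₀ := by
      intro p
      set S := p.asIdeal.primeCompl with hS
      set A := Localization.AtPrime p.asIdeal with hA
      let f' : LocalizedModule S L₀ →ₗ[R] LocalizedModule S M₀ :=
        IsLocalizedModule.map S (LocalizedModule.mkLinearMap S L₀)
          (LocalizedModule.mkLinearMap S M₀) f₀
      let g' : LocalizedModule S M₀ →ₗ[R] LocalizedModule S N₀ :=
        IsLocalizedModule.map S (LocalizedModule.mkLinearMap S M₀)
          (LocalizedModule.mkLinearMap S N₀) g₀
      have hf' : Function.Injective f' :=
        IsLocalizedModule.map_injective S _ _ f₀ hf₀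
      have hg' : Function.Surjective g' :=
        IsLocalizedModule.map_surjective S _ _ g₀ hg₀
      have hex' : Function.Exact f' g' :=
        IsLocalizedModule.map_exact S _ _ _ f₀ g₀ hex₀
      have key := SyzProofAux.min_localDepth_le A
        (L := ModuleCat.of A (LocalizedModule S L₀))
        (M := ModuleCat.of A (LocalizedModule S M₀))
        (N := ModuleCat.of A (LocalizedModule S N₀))
        (f'.extendScalarsOfIsLocalization S A)
        (g'.extendScalarsOfIsLocalization S A)
        hf' hg' hex'
      exact le_trans (le_min (hL p) (hN p)) key
    have hsM₀ := (h M₀ finM₀).mpr hserre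
    exact SyzProofAux.isSyzygyOf_equiv R n M₀ M eM hsM₀
end
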